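/- Suppose a string S[i..j] has smallest period at most τ/4 and |S[i..j]| ≥ τ, and S[i..j] is contained in a τ-run R of S; then R is the unique τ-run containing S[i..j] (no other τ-run can contain it). -/

import Mathlib

/-- `P` occurs at (0-indexed) position `i` of `T`. -/
def occursAt {α : Type*} (P T : List α) (i : ℕ) : Prop :=
  (T.drop i).take P.length = P

/-- `ρ` is a period of `P`. -/
def isPeriod {α : Type*} (P : List α) (ρ : ℕ) : Prop :=
  0 < ρ ∧ ∀ k, k + ρ < P.length → P[k]? = P[k + ρ]?

/-- The smallest period of `P`. -/
noncomputable def per {α : Type*} (P : List α) : ℕ :=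
  sInf {ρ | isPeriod P ρ}

/-- The fragment of `S` on (0-indexed, inclusive) positions `i..j`. -/
def frag {α : Type*} (S : List α) (i j : ℕ) : List α :=
  (S.drop i).take (j - i + 1)

/-- The fragment `S[i..j]` (0-indexed, inclusive) is a `τ`-run of `S`:
length greater than `3τ`, smallest period at most `τ/4`, and maximal, i.e.,
it cannot be extended in either direction without its smallest period changing. -/
def isTauRun {α : Type*} (S : List α) (τ i j : ℕ) : Prop :=
  i ≤ j ∧ j < S.length ∧ 3 * τ < j - i + 1 ∧ per (frag S i j) ≤ τ / 4 ∧
  (i = 0 ∨ per (frag S (i - 1) j) ≠ per (frag S i j)) ∧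
  (j = S.length - 1 ∨ per (frag S i (j + 1)) ≠ per (frag S i j))

namespace Aux
variable {α : Type*}

def PerOn (S : List α) (a b ρ : ℕ) : Prop :=
  ∀ k, a ≤ k → k + ρ ≤ b → S[k]? = S[k + ρ]?

lemma per_isPeriod (P : List α) : isPeriod P (per P) := by
  have : per P ∈ {ρ | isPeriod P ρ} :=
    Nat.sInf_mem ⟨P.length + 1, Nat.succ_pos _, fun k h => absurd h (by omega)⟩
  exact this

lemma frag_length (S : List α) (a b : ℕ) (hab : a ≤ b) (hb : b < S.length) :
    (frag S a b).length = b - a + 1 := by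
  simp [frag]; omega

lemma frag_get? (S : List α) (a b k : ℕ) (hk : k < b - a + 1) :
    (frag S a b)[k]? = S[a + k]? := by
  unfold frag
  rw [List.getElem?_take_of_lt hk, List.getElem?_drop]

lemma isPeriod_iff (S : List α) (a b ρ : ℕ) (hab : a ≤ b) (hb : b < S.length) :
    isPeriod (frag S a b) ρ ↔ 0 < ρ ∧ PerOn S a b ρ := by
  have hlen := frag_length S a b hab hb
  constructor
  · rintro ⟨hρ, h⟩
    refine ⟨hρ, fun k hak hkb => ?_⟩
    have h1 := h (k - a) (by omega)
    rw [frag_get? S a b _ (by omega), frag_get? S a b _ (by omega)] at h1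
    have e1 : a + (k - a) = k := by omega
    have e2 : a + (k - a + ρ) = k + ρ := by omega
    rwa [e1, e2] at h1
  · rintro ⟨hρ, h⟩
    refine ⟨hρ, fun k hk => ?_⟩
    rw [hlen] at hk
    rw [frag_get? S a b _ (by omega), frag_get? S a b _ (by omega)]
    have := h (a + k) (by omega) (by omega)
    rwa [Nat.add_assoc] at this

/-- If `a' < a`, we get a contradiction with left-maximality of run `[a,b]`. -/
lemma left_case (S : List α) (τ i j a b a' b' : ℕ) (hτ : 4 ≤ τ) (hij : i ≤ j)
    (hlen : τ ≤ j - i + 1)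
    (hR : isTauRun S τ a b) (hR' : isTauRun S τ a' b')
    (ha : a ≤ i) (hb : j ≤ b) (ha' : a' ≤ i) (hb' : j ≤ b')
    (hlt : a' < a) : False := by
  obtain ⟨hab, hbS, -, hpτ, hmaxL, -⟩ := hR
  obtain ⟨hab', hbS', -, hpτ', -, -⟩ := hR'
  set p := per (frag S a b) with hp_def
  set p' := per (frag S a' b') with hp'_def
  have hp := (isPeriod_iff S a b p hab hbS).mp (per_isPeriod _)
  have hp' := (isPeriod_iff S a' b' p' hab' hbS').mp (per_isPeriod _)
  obtain ⟨hppos, hP⟩ := hp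
  obtain ⟨hp'pos, hP'⟩ := hp'
  -- key: S[a-1] = S[a-1+p]
  set c := a - 1 with hc
  have hjb : i + τ ≤ j + 1 := by omega
  have hsum : p + p' ≤ τ := by omega
  have e1 : S[c]? = S[c + p']? := hP' c (by omega) (by omega)
  have e2 : S[c + p']? = S[c + p' + p]? := hP (c + p') (by omega) (by omega)
  have e3 : S[c + p]? = S[c + p + p']? := hP' (c + p) (by omega) (by omega)
  have ekey : S[c]? = S[c + p]? := by
    rw [e1, e2, e3]; ring_nf
  -- extended fragment has period p
  have hPext : PerOn S c b p := by
    intro k hk hkb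
    rcases Nat.lt_or_ge k a with hka | hka
    · have : k = c := by omega
      rw [this]; exact ekey
    · exact hP k hka hkb
  have hext : isPeriod (frag S c b) p :=
    (isPeriod_iff S c b p (by omega) hbS).mpr ⟨hppos, hPext⟩
  have hle : per (frag S c b) ≤ p := Nat.sInf_le hext
  -- per of extended is also a period of [a,b]
  have hq := (isPeriod_iff S c b _ (by omega) hbS).mp (per_isPeriod (frag S c b))
  have hge : p ≤ per (frag S c b) := by
    apply Nat.sInf_le
    exact (isPeriod_iff S a b _ hab hbS).mpr
      ⟨hq.1, fun k hk hkb => hq.2 k (by omega) hkb⟩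
  rcases hmaxL with h0 | hne
  · omega
  · exact hne (by rw [hc] at hle hge ⊢; omega)

/-- If `b < b'`, we get a contradiction with right-maximality of run `[a,b]`. -/
lemma right_case (S : List α) (τ i j a b a' b' : ℕ) (hτ : 4 ≤ τ) (hij : i ≤ j)
    (hlen : τ ≤ j - i + 1)
    (hR : isTauRun S τ a b) (hR' : isTauRun S τ a' b')
    (ha : a ≤ i) (hb : j ≤ b) (ha' : a' ≤ i) (hb' : j ≤ b')
    (hlt : b < b') : False := by
  obtain ⟨hab, hbS, -, hpτ, -, hmaxR⟩ := hR
  obtain ⟨hab', hbS', -, hpτ', -, -⟩ := hR'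
  set p := per (frag S a b) with hp_def
  set p' := per (frag S a' b') with hp'_def
  have hp := (isPeriod_iff S a b p hab hbS).mp (per_isPeriod _)
  have hp' := (isPeriod_iff S a' b' p' hab' hbS').mp (per_isPeriod _)
  obtain ⟨hppos, hP⟩ := hp
  obtain ⟨hp'pos, hP'⟩ := hp'
  have hjb : i + τ ≤ j + 1 := by omega
  have hsum : p + p' ≤ τ := by omega
  have hb1S : b + 1 < S.length := by omega
  -- extended fragment [a, b+1] has period p
  have hPext : PerOn S a (b + 1) p := by
    intro k hk hkb
    rcases Nat.lt_or_ge (k + p) (b + 1) with hkp | hkp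
    · exact hP k hk (by omega)
    · have hkp1 : k + p = b + 1 := by omega
      set y := k - p' with hy
      have hyk : y + p' = k := by omega
      have e1 : S[y]? = S[y + p']? := hP' y (by omega) (by omega)
      have e2 : S[y]? = S[y + p]? := hP y (by omega) (by omega)
      have e3 : S[y + p]? = S[y + p + p']? := hP' (y + p) (by omega) (by omega)
      have h4 : y + p + p' = k + p := by omega
      rw [hyk] at e1
      rw [h4] at e3
      rw [← e1, e2, e3]
  have hext : isPeriod (frag S a (b + 1)) p :=
    (isPeriod_iff S a (b + 1) p (by omega) hb1S).mpr ⟨hppos, hPext⟩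
  have hle : per (frag S a (b + 1)) ≤ p := Nat.sInf_le hext
  have hq := (isPeriod_iff S a (b + 1) _ (by omega) hb1S).mp (per_isPeriod (frag S a (b + 1)))
  have hge : p ≤ per (frag S a (b + 1)) := by
    apply Nat.sInf_le
    exact (isPeriod_iff S a b _ hab hbS).mpr
      ⟨hq.1, fun k hk hkb => hq.2 k hk (by omega)⟩
  rcases hmaxR with h0 | hne
  · omega
  · exact hne (by omega)

end Aux

/-- A fragment `S[i..j]` of length at least `τ` and smallest period at most `τ/4`
that is contained in a `τ`-run `R = S[r₁..r₂]` is contained in no other `τ`-run. -/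
theorem unique_containing_tau_run {α : Type*} (S : List α) (τ i j r₁ r₂ : ℕ)
    (hτ : 4 ≤ τ) (hij : i ≤ j) (hj : j < S.length)
    (hlen : τ ≤ j - i + 1) (hper : per (frag S i j) ≤ τ / 4)
    (hR : isTauRun S τ r₁ r₂) (hc₁ : r₁ ≤ i) (hc₂ : j ≤ r₂) :
    ∀ r₁' r₂' : ℕ, isTauRun S τ r₁' r₂' → r₁' ≤ i → j ≤ r₂' →
      (r₁', r₂') = (r₁, r₂) := by
  intro r₁' r₂' hR' h1 h2
  have e1 : r₁' = r₁ := by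
    rcases Nat.lt_trichotomy r₁' r₁ with h | h | h
    · exact absurd (Aux.left_case S τ i j r₁ r₂ r₁' r₂' hτ hij hlen hR hR' hc₁ hc₂ h1 h2 h) id
    · exact h
    · exact absurd (Aux.left_case S τ i j r₁' r₂' r₁ r₂ hτ hij hlen hR' hR h1 h2 hc₁ hc₂ h) id
  have e2 : r₂' = r₂ := by
    rcases Nat.lt_trichotomy r₂ r₂' with h | h | h
    · exact absurd (Aux.right_case S τ i j r₁ r₂ r₁' r₂' hτ hij hlen hR hR' hc₁ hc₂ h1 h2 h) id
    · exact h.symm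
    · exact absurd (Aux.right_case S τ i j r₁' r₂' r₁ r₂ hτ hij hlen hR' hR h1 h2 hc₁ hc₂ h) id
  rw [e1, e2]
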